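/- For a logit vector g ∈ R^k with unique maximum at index c, the confidence max_i σ(g/τ)_i = σ(g/τ)_c is a strictly decreasing function of τ on (0, ∞), with range (1/k, 1) as τ ranges over (0, ∞). -/

import Mathlib

noncomputable def softmax {k : ℕ} (z : Fin k → ℝ) (i : Fin k) : ℝ :=
  Real.exp (z i) / ∑ j, Real.exp (z j)

theorem stmt11 {k : ℕ} (hk : 1 < k) (g : Fin k → ℝ) (c : Fin k)
    (hc : ∀ i, i ≠ c → g i < g c) :
    StrictAntiOn (fun τ : ℝ => softmax (fun j => g j / τ) c) (Set.Ioi 0)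
    ∧ (fun τ : ℝ => softmax (fun j => g j / τ) c) '' Set.Ioi 0 =
        Set.Ioo (1 / (k : ℝ)) 1 := by
  haveI : Nontrivial (Fin k) := Fin.nontrivial_iff_two_le.mpr hk
  obtain ⟨i₀, hi₀⟩ := exists_ne c
  set F : ℝ → ℝ := fun τ => ∑ j, Real.exp ((g j - g c) / τ) with hF
  have heq : (fun τ : ℝ => softmax (fun j => g j / τ) c) = fun τ => 1 / F τ := by
    funext τ
    have : F τ = (∑ j, Real.exp (g j / τ)) / Real.exp (g c / τ) := by
      rw [hF, Finset.sum_div]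
      refine Finset.sum_congr rfl fun j _ => ?_
      rw [sub_div, Real.exp_sub]
    simp only [softmax, this, one_div_div]
  -- pointwise bounds
  have hgle : ∀ (j : Fin k) (τ : ℝ), 0 < τ → (g j - g c) / τ ≤ 0 := by
    intro j τ hτ
    rcases eq_or_ne j c with rfl | hj
    · simp
    · have := (hc j hj).le
      apply div_nonpos_of_nonpos_of_nonneg <;> linarith
  have hglt : ∀ (j : Fin k) (τ : ℝ), 0 < τ → j ≠ c → (g j - g c) / τ < 0 := by
    intro j τ hτ hj
    have := hc j hj
    apply div_neg_of_neg_of_pos <;> linarith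
  have hF1 : ∀ τ ∈ Set.Ioi (0:ℝ), 1 < F τ := by
    intro τ hτ
    have h : Real.exp ((g c - g c) / τ) < ∑ j, Real.exp ((g j - g c) / τ) :=
      Finset.single_lt_sum (f := fun j => Real.exp ((g j - g c) / τ)) hi₀ (Finset.mem_univ c) (Finset.mem_univ i₀)
        (Real.exp_pos _) fun j _ _ => (Real.exp_pos _).le
    show (1:ℝ) < ∑ j, Real.exp ((g j - g c) / τ)
    simpa using h
  have hFk : ∀ τ ∈ Set.Ioi (0:ℝ), F τ < k := by
    intro τ hτ
    have : F τ < ∑ _j : Fin k, (1:ℝ) := by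
      refine Finset.sum_lt_sum (fun j _ => Real.exp_le_one_iff.mpr (hgle j τ hτ))
        ⟨i₀, Finset.mem_univ _, Real.exp_lt_one_iff.mpr (hglt i₀ τ hτ hi₀)⟩
    simpa using this
  have hF0 : ∀ τ ∈ Set.Ioi (0:ℝ), 0 < F τ := fun τ hτ => lt_trans one_pos (hF1 τ hτ)
  have hmono : StrictMonoOn F (Set.Ioi 0) := by
    intro x hx y hy hxy
    refine Finset.sum_lt_sum (fun j _ => Real.exp_le_exp.mpr ?_)
      ⟨i₀, Finset.mem_univ _, Real.exp_lt_exp.mpr ?_⟩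
    · rcases eq_or_ne j c with rfl | hj
      · simp
      · have h1 : g j - g c < 0 := by have := hc j hj; linarith
        rw [div_le_div_iff₀ (by exact hx) (lt_trans hx hxy)]
        nlinarith
    · have h1 : g i₀ - g c < 0 := by have := hc i₀ hi₀; linarith
      rw [div_lt_div_iff₀ (by exact hx) (lt_trans hx hxy)]
      nlinarith
  have hanti : StrictAntiOn (fun τ : ℝ => softmax (fun j => g j / τ) c) (Set.Ioi 0) := by
    rw [heq]
    intro x hx y hy hxy
    exact one_div_lt_one_div_of_lt (hF0 x hx) (hmono hx hy hxy)
  refine ⟨hanti, ?_⟩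
  have hcontF : ContinuousOn F (Set.Ioi 0) := by
    apply continuousOn_finset_sum
    intro j _
    exact Real.continuous_exp.comp_continuousOn
      (continuousOn_const.div continuousOn_id fun x hx => ne_of_gt hx)
  have hcont : ContinuousOn (fun τ : ℝ => softmax (fun j => g j / τ) c) (Set.Ioi 0) := by
    rw [heq]
    exact continuousOn_const.div hcontF fun τ hτ => ne_of_gt (hF0 τ hτ)
  -- limit at 0+
  have hlim0 : Filter.Tendsto F (nhdsWithin 0 (Set.Ioi 0)) (nhds 1) := by
    have : Filter.Tendsto F (nhdsWithin 0 (Set.Ioi 0))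
        (nhds (∑ j : Fin k, if j = c then (1:ℝ) else 0)) := by
      apply tendsto_finset_sum
      intro j _
      rcases eq_or_ne j c with rfl | hj
      · simp only [if_pos rfl, sub_self, zero_div, Real.exp_zero]
        exact tendsto_const_nhds
      · simp only [if_neg hj]
        have h1 : g j - g c < 0 := by have := hc j hj; linarith
        have h2 : Filter.Tendsto (fun τ : ℝ => (g j - g c) / τ)
            (nhdsWithin 0 (Set.Ioi 0)) Filter.atBot := by
          simp only [div_eq_mul_inv]
          exact (tendsto_inv_nhdsGT_zero).const_mul_atTop_of_neg h1
        exact Real.tendsto_exp_atBot.comp h2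
      
    simpa using this
  have hlimtop : Filter.Tendsto F Filter.atTop (nhds k) := by
    have : Filter.Tendsto F Filter.atTop (nhds (∑ _j : Fin k, (1:ℝ))) := by
      apply tendsto_finset_sum
      intro j _
      have h2 : Filter.Tendsto (fun τ : ℝ => (g j - g c) / τ) Filter.atTop (nhds 0) :=
        tendsto_const_nhds.div_atTop Filter.tendsto_id
      simpa [Function.comp_def] using (Real.continuous_exp.tendsto 0).comp h2
    simpa using this
  have hk0 : (0:ℝ) < k := by exact_mod_cast lt_trans Nat.zero_lt_one hk
  have hlim0' : Filter.Tendsto (fun τ : ℝ => softmax (fun j => g j / τ) c)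
      (nhdsWithin 0 (Set.Ioi 0)) (nhds 1) := by
    rw [heq]
    simpa using hlim0.inv₀ one_ne_zero
  have hlimtop' : Filter.Tendsto (fun τ : ℝ => softmax (fun j => g j / τ) c)
      Filter.atTop (nhds (1 / k)) := by
    rw [heq]
    simpa [one_div] using hlimtop.inv₀ (ne_of_gt hk0)
  apply Set.Subset.antisymm
  · rintro y ⟨τ, hτ, rfl⟩
    rw [heq]
    constructor
    · exact one_div_lt_one_div_of_lt (hF0 τ hτ) (hFk τ hτ)
    · rw [div_lt_one (hF0 τ hτ)]
      exact hF1 τ hτ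
  · haveI : (nhdsWithin (0:ℝ) (Set.Ioi 0)).NeBot := by infer_instance
    exact isPreconnected_Ioi.intermediate_value_Ioo
      (Filter.le_principal_iff.mpr (Filter.Ioi_mem_atTop 0))
      (Filter.le_principal_iff.mpr self_mem_nhdsWithin)
      hcont hlimtop' hlim0'
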